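/- Let S be a nonempty compact convex subset of [0,1]^n, let p(x) = Σ_α c_α ∏_j x_j^{α_j} be a real multivariate polynomial in n variables with total degree at most m, where m ≥ 2 is an integer. Let z_S = inf_{x ∈ S} p(x), and let z_mon = inf { Σ_{α ∈ supp(p)} c_α w_α : x ∈ S and (x, w_α) lies in the convex hull of G_S^α for every α in the support of p }. Then z_S − z_mon ≤ (max_{α ∈ supp(p)} |c_α|) · (1 − 1/m) · m^{1/(1−m)} · binom(n+m, n). -/

import Mathlib

open Finset



-- D m ≥ 0
lemma Dnn (m : ℕ) (hm : 2 ≤ m) :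
    0 ≤ (1 - 1 / (m : ℝ)) * (m : ℝ) ^ ((1 : ℝ) / (1 - (m : ℝ))) := by
  have hm1 : (1:ℝ) ≤ m := by exact_mod_cast Nat.one_le_of_lt hm
  have h1 : (0:ℝ) ≤ 1 - 1/m := by
    have : 1/(m:ℝ) ≤ 1 := by
      rw [div_le_one (by linarith)]; exact hm1
    linarith
  have h2 : (0:ℝ) < (m : ℝ) ^ ((1 : ℝ) / (1 - (m : ℝ))) :=
    Real.rpow_pos_of_pos (by linarith) _
  positivity

-- u^(m-1) = 1/m where u = m^(1/(1-m))
lemma upow (m : ℕ) (hm : 2 ≤ m) :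
    ((m : ℝ) ^ ((1 : ℝ) / (1 - (m : ℝ)))) ^ (m - 1) = 1 / (m:ℝ) := by
  have hm1 : (1:ℝ) < m := by exact_mod_cast hm
  have hm0 : (0:ℝ) < m := by linarith
  have hne : (1:ℝ) - m ≠ 0 := by linarith
  have hc : ((m - 1 : ℕ) : ℝ) = (m:ℝ) - 1 := by
    have : (1:ℕ) ≤ m := by omega
    push_cast [this]; ring
  rw [← Real.rpow_natCast ((m : ℝ) ^ ((1 : ℝ) / (1 - (m : ℝ)))) (m-1),
    ← Real.rpow_mul (le_of_lt hm0), hc]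
  have : (1 : ℝ) / (1 - (m : ℝ)) * ((m:ℝ) - 1) = -1 := by
    field_simp
    ring
  rw [this, Real.rpow_neg_one]
  exact (one_div _).symm

-- concave gap
lemma conc_gap (m : ℕ) (hm : 2 ≤ m) (t : ℝ) (ht0 : 0 ≤ t) (ht1 : t ≤ 1) :
    t - t ^ m ≤ (1 - 1 / (m : ℝ)) * (m : ℝ) ^ ((1 : ℝ) / (1 - (m : ℝ))) := by
  have hm1 : (1:ℝ) < m := by exact_mod_cast hm
  set u : ℝ := (m : ℝ) ^ ((1 : ℝ) / (1 - (m : ℝ))) with hu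
  have hu0 : 0 < u := Real.rpow_pos_of_pos (by linarith) _
  have hu1 : u ≤ 1 :=
    Real.rpow_le_one_of_one_le_of_nonpos (by linarith)
      (div_nonpos_of_nonneg_of_nonpos zero_le_one (by linarith))
  have hum : u ^ (m-1) = 1 / (m:ℝ) := upow m hm
  have hmu : u ^ m = u / m := by
    have h1 : m = (m - 1) + 1 := by omega
    calc u ^ m = u ^ (m-1) * u := by conv_lhs => rw [h1, pow_succ]
    _ = u / m := by rw [hum]; ring
  have hrhs : (1 - 1 / (m : ℝ)) * u = u - u ^ m := by
    rw [hmu]; ring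
  rw [hrhs]
  have hgs := geom_sum₂_mul t u m
  rcases le_total t u with h | h
  · have hsum : ∑ i ∈ range m, t ^ i * u ^ (m - 1 - i) ≤ 1 := by
      calc ∑ i ∈ range m, t ^ i * u ^ (m - 1 - i)
          ≤ ∑ i ∈ range m, u ^ (m-1) := by
            apply Finset.sum_le_sum
            intro i hi
            have hi' : i ≤ m - 1 := by
              have := Finset.mem_range.mp hi; omega
            have : t ^ i * u ^ (m - 1 - i) ≤ u ^ i * u ^ (m - 1 - i) :=
              mul_le_mul_of_nonneg_right (pow_le_pow_left₀ ht0 h i)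
                (pow_nonneg hu0.le _)
            calc t ^ i * u ^ (m - 1 - i) ≤ u ^ i * u ^ (m - 1 - i) := this
            _ = u ^ (m-1) := by rw [← pow_add]; congr 1; omega
      _ = m * u ^ (m-1) := by rw [Finset.sum_const, card_range]; ring
      _ = 1 := by rw [hum]; field_simp
    nlinarith [hgs]
  · have hsum : (1:ℝ) ≤ ∑ i ∈ range m, t ^ i * u ^ (m - 1 - i) := by
      calc (1:ℝ) = m * u ^ (m-1) := by rw [hum]; field_simp
      _ = ∑ i ∈ range m, u ^ (m-1) := by rw [Finset.sum_const, card_range]; ring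
      _ ≤ ∑ i ∈ range m, t ^ i * u ^ (m - 1 - i) := by
            apply Finset.sum_le_sum
            intro i hi
            have hi' : i ≤ m - 1 := by
              have := Finset.mem_range.mp hi; omega
            calc u ^ (m-1) = u ^ i * u ^ (m - 1 - i) := by
                  rw [← pow_add]; congr 1; omega
            _ ≤ t ^ i * u ^ (m - 1 - i) :=
              mul_le_mul_of_nonneg_right (pow_le_pow_left₀ hu0.le h i)
                (pow_nonneg hu0.le _)
    nlinarith [hgs]



-- exp(-1) ≤ D m for m ≥ 3
lemma exp_le_D (m : ℕ) (hm : 3 ≤ m) :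
    Real.exp (-1) ≤ (1 - 1 / (m : ℝ)) * (m : ℝ) ^ ((1 : ℝ) / (1 - (m : ℝ))) := by
  have hm1 : (3:ℝ) ≤ m := by exact_mod_cast hm
  have hm0 : (0:ℝ) < m := by linarith
  have he : (2.7182818283 : ℝ) < Real.exp 1 := Real.exp_one_gt_d9
  rcases eq_or_lt_of_le hm with h3 | h4
  · -- m = 3 : need exp(-1) ≤ (2/3) * 3^(-1/2)
    subst h3
    have h1 : ((3:ℕ) : ℝ) = (3:ℝ) := by norm_num
    rw [h1]
    have hexp : (1 : ℝ) / (1 - (3:ℝ)) = -(1/2) := by norm_num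
    rw [hexp, Real.rpow_neg (by norm_num : (0:ℝ) ≤ 3)]
    have hsq : (3:ℝ) ^ ((1:ℝ)/2) = Real.sqrt 3 := (Real.sqrt_eq_rpow 3).symm
    rw [show ((1:ℝ)/2) = ((1:ℝ)/2) from rfl, hsq]
    have hs0 : (0:ℝ) < Real.sqrt 3 := Real.sqrt_pos.mpr (by norm_num)
    have hs2 : Real.sqrt 3 * Real.sqrt 3 = 3 :=
      Real.mul_self_sqrt (by norm_num)
    have hsle : Real.sqrt 3 ≤ 1.7320509 := by nlinarith
    have key : 3 * Real.sqrt 3 ≤ 2 * Real.exp 1 := by nlinarith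
    rw [Real.exp_neg]
    have he0 : (0:ℝ) < Real.exp 1 := Real.exp_pos 1
    rw [inv_le_iff_one_le_mul₀ he0]
    have h2 : (0:ℝ) < (1 - 1/3) * (Real.sqrt 3)⁻¹ * Real.exp 1 := by positivity
    have hinv : Real.sqrt 3 * (Real.sqrt 3)⁻¹ = 1 := mul_inv_cancel₀ hs0.ne'
    nlinarith [mul_pos hs0 he0]
  · -- m ≥ 4
    have hm4 : (4:ℝ) ≤ m := by exact_mod_cast h4
    have hmne : (m:ℝ) - 1 ≠ 0 := by linarith
    have hmne' : (1:ℝ) - (m:ℝ) ≠ 0 := by linarith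
    have hlog1 : Real.log ((m:ℝ)/((m:ℝ)-1)) ≤ 1/((m:ℝ)-1) := by
      have hpos : (0:ℝ) < (m:ℝ)/((m:ℝ)-1) := div_pos hm0 (by linarith)
      have := Real.log_le_sub_one_of_pos hpos
      have h' : (m:ℝ)/((m:ℝ)-1) - 1 = 1/((m:ℝ)-1) := by field_simp; ring
      linarith [h' ▸ this]
    have hlogm : Real.log m ≤ (m:ℝ) / Real.exp 1 := by
      have h := Real.log_le_sub_one_of_pos (x := (m:ℝ)/Real.exp 1) (by positivity)
      rw [Real.log_div (by linarith) (Real.exp_ne_zero 1), Real.log_exp] at h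
      linarith
    have h1m : (0:ℝ) < 1 - 1/(m:ℝ) := by
      rw [sub_pos, div_lt_one hm0]; linarith
    have hrw : (1 - 1 / (m : ℝ)) * (m : ℝ) ^ ((1 : ℝ) / (1 - (m : ℝ)))
        = Real.exp (Real.log (1 - 1/(m:ℝ)) + (1 / (1 - (m:ℝ))) * Real.log m) := by
      rw [Real.exp_add, Real.exp_log h1m, Real.rpow_def_of_pos hm0]
      ring_nf
    rw [hrw]
    apply Real.exp_le_exp.mpr
    have hlg : Real.log (1 - 1/(m:ℝ)) = - Real.log ((m:ℝ)/((m:ℝ)-1)) := by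
      rw [← Real.log_inv]
      congr 1
      field_simp
    have he2 : (2:ℝ) < Real.exp 1 := by linarith
    have key : 1/((m:ℝ)-1) + (Real.log m)/((m:ℝ)-1) ≤ 1 := by
      rw [← add_div, div_le_one (by linarith)]
      have : (m:ℝ)/Real.exp 1 ≤ (m:ℝ)/2 := by
        apply div_le_div_of_nonneg_left (by linarith) (by norm_num) he2.le
      have h2 : Real.log m ≤ (m:ℝ)/2 := by linarith
      linarith
    have hflip : (1 / (1 - (m:ℝ))) * Real.log m = -(Real.log m/((m:ℝ)-1)) := by
      field_simp
      ring
    rw [hlg, hflip]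
    linarith [hlog1]




-- step 2 : (1-1/d)^d ≤ D m for 1 ≤ d ≤ m
lemma pow_le_D (m d : ℕ) (hm : 2 ≤ m) (hd : 1 ≤ d) (hdm : d ≤ m) :
    (1 - 1/(d:ℝ))^d ≤ (1 - 1 / (m : ℝ)) * (m : ℝ) ^ ((1 : ℝ) / (1 - (m : ℝ))) := by
  rcases eq_or_lt_of_le hd with h1 | h2
  · have hz : (1 - 1/((d:ℕ):ℝ))^d = 0 := by rw [← h1]; norm_num
    rw [hz]; exact Dnn m hm
  · have hd2 : 2 ≤ d := h2
    have hd0 : (0:ℝ) < d := by positivity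
    have hd1 : (1:ℝ) < d := by exact_mod_cast hd2
    have hc0 : (0:ℝ) ≤ 1 - 1/(d:ℝ) := by
      rw [sub_nonneg, div_le_one hd0]; linarith
    have hb : 1 - 1/(d:ℝ) ≤ Real.exp (-(1/(d:ℝ))) := by
      have := Real.add_one_le_exp (-(1/(d:ℝ)))
      linarith
    have hpow : (1 - 1/(d:ℝ))^d ≤ Real.exp (-(1/(d:ℝ)))^d :=
      pow_le_pow_left₀ hc0 hb d
    have hexp : Real.exp (-(1/(d:ℝ)))^d = Real.exp (-1) := by
      rw [← Real.exp_nat_mul]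
      congr 1
      field_simp
    rcases eq_or_lt_of_le hm with hm2 | hm3
    · -- m = 2, hence d = 2
      have hd2' : d = 2 := by omega
      subst hd2'
      rw [← hm2]
      norm_num
    · calc (1 - 1/(d:ℝ))^d ≤ Real.exp (-1) := by rw [← hexp]; exact hpow
      _ ≤ _ := exp_le_D m hm3

-- step 1: full convex-side gap
lemma conv_gap (m d : ℕ) (hm : 2 ≤ m) (hd : 1 ≤ d) (hdm : d ≤ m)
    (s g : ℝ) (hs0 : 0 ≤ s) (hs1 : s ≤ 1)
    (hg1 : g ≤ s ^ d) (hg2 : g ≤ s ^ d - d * s + d - 1) :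
    g ≤ (1 - 1 / (m : ℝ)) * (m : ℝ) ^ ((1 : ℝ) / (1 - (m : ℝ))) := by
  have hd0 : (0:ℝ) < d := by positivity
  set c : ℝ := 1 - 1/(d:ℝ) with hc
  have hc0 : (0:ℝ) ≤ c := by
    rw [hc, sub_nonneg, div_le_one hd0]
    exact_mod_cast hd
  have hc1 : c ≤ 1 := by
    rw [hc]; have : (0:ℝ) ≤ 1/(d:ℝ) := by positivity
    linarith
  have step1 : g ≤ c ^ d := by
    rcases le_total s c with h | h
    · exact le_trans hg1 (pow_le_pow_left₀ hs0 h d)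
    · have hgs := geom_sum₂_mul s c d
      have hsum : ∑ i ∈ range d, s ^ i * c ^ (d - 1 - i) ≤ d := by
        calc ∑ i ∈ range d, s ^ i * c ^ (d - 1 - i) ≤ ∑ _i ∈ range d, (1:ℝ) := by
              apply Finset.sum_le_sum
              intro i hi
              have h1 : s ^ i ≤ 1 := pow_le_one₀ hs0 hs1
              have h2 : c ^ (d-1-i) ≤ 1 := pow_le_one₀ hc0 hc1
              have h3 : (0:ℝ) ≤ s ^ i := pow_nonneg hs0 i
              nlinarith
        _ = d := by rw [Finset.sum_const, card_range]; ring
      have hdc : (d:ℝ) * c = d - 1 := by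
        rw [hc]; field_simp
      nlinarith [pow_nonneg hc0 d, sub_nonneg.mpr h,
        mul_le_mul_of_nonneg_right hsum (sub_nonneg.mpr h)]
  exact le_trans step1 (pow_le_D m d hm hd hdm)


lemma card_support_le (n m : ℕ) (p : MvPolynomial (Fin n) ℝ) (hdeg : p.totalDegree ≤ m) :
    p.support.card ≤ (n + m).choose n := by
  classical
  have key : ∀ a ∈ p.support, (a.sum fun _ e => e) ≤ m := fun a ha =>
    le_trans (MvPolynomial.le_totalDegree ha) hdeg
  set φ : (Fin n →₀ ℕ) → Sym (Fin (n+1)) m := fun a =>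
    if h : (a.sum fun _ e => e) ≤ m then
      ⟨Multiset.map Fin.castSucc (Finsupp.toMultiset a)
        + Multiset.replicate (m - (a.sum fun _ e => e)) (Fin.last n), by
          simp only [Multiset.card_add, Multiset.card_map, Multiset.card_replicate,
            Finsupp.card_toMultiset]
          have : (a.sum fun _ => id) = (a.sum fun _ e => e) := rfl
          rw [this]
          omega⟩
    else Sym.replicate m (Fin.last n) with hφ
  have hcount : ∀ a : Fin n →₀ ℕ, ∀ j : Fin n, (a.sum fun _ e => e) ≤ m →
      Multiset.count (Fin.castSucc j) (φ a : Multiset (Fin (n+1))) = a j := by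
    intro a j h
    rw [hφ]
    simp only [dif_pos h]
    erw [dif_pos h]
    show Multiset.count (Fin.castSucc j) (Multiset.map Fin.castSucc (Finsupp.toMultiset a)
        + Multiset.replicate (m - (a.sum fun _ e => e)) (Fin.last n)) = a j
    rw [Multiset.count_add, Multiset.count_map_eq_count' _ _ (Fin.castSucc_injective n),
      Finsupp.count_toMultiset, Multiset.count_replicate, if_neg ((Fin.castSucc_lt_last j).ne')]
    simp
  have hinj : Set.InjOn φ p.support := by
    intro a ha b hb hab
    ext j
    rw [← hcount a j (key a ha), ← hcount b j (key b hb), hab]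
  calc p.support.card ≤ (Finset.univ : Finset (Sym (Fin (n+1)) m)).card :=
        Finset.card_le_card_of_injOn φ (fun a _ => Finset.mem_univ _) hinj
  _ = Fintype.card (Sym (Fin (n+1)) m) := rfl
  _ = (n + m).choose n := by
      rw [Sym.card_sym_eq_choose, Fintype.card_fin]
      have h1 : n + 1 + m - 1 = n + m := by omega
      rw [h1]
      rw [← Nat.choose_symm (Nat.le_add_left m n)]
      congr 1
      omega

lemma weier {ι : Type*} (s : Finset ι) (a : ι → ℕ) (x : ι → ℝ)
    (hx0 : ∀ j, 0 ≤ x j) (hx1 : ∀ j, x j ≤ 1) :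
    1 - ∑ j ∈ s, (a j : ℝ) * (1 - x j) ≤ ∏ j ∈ s, x j ^ a j := by
  classical
  induction s using Finset.cons_induction with
  | empty => simp
  | cons i s his ih =>
    rw [Finset.prod_cons, Finset.sum_cons]
    have hT0 : 0 ≤ ∑ j ∈ s, (a j : ℝ) * (1 - x j) :=
      Finset.sum_nonneg fun j _ => mul_nonneg (by positivity) (by linarith [hx1 j])
    have hP1 : ∏ j ∈ s, x j ^ a j ≤ 1 :=
      Finset.prod_le_one (fun j _ => pow_nonneg (hx0 j) _)
        (fun j _ => pow_le_one₀ (hx0 j) (hx1 j))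
    have hxa0 : (0:ℝ) ≤ x i ^ a i := pow_nonneg (hx0 i) _
    have hxa1 : x i ^ a i ≤ 1 := pow_le_one₀ (hx0 i) (hx1 i)
    have hbern : 1 + (a i : ℝ) * (x i - 1) ≤ x i ^ a i := by
      have := one_add_mul_le_pow (a := x i - 1) (by linarith [hx0 i]) (a i)
      have h' : 1 + (x i - 1) = x i := by ring
      rw [h'] at this
      exact_mod_cast this
    have step : x i ^ a i * ∏ j ∈ s, x j ^ a j
        ≥ x i ^ a i * (1 - ∑ j ∈ s, (a j : ℝ) * (1 - x j)) :=
      mul_le_mul_of_nonneg_left ih hxa0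
    nlinarith










lemma hull_gap (n m : ℕ) (hm : 2 ≤ m) (S : Set (Fin n → ℝ)) (hSsub : S ⊆ Set.Icc 0 1)
    (a : Fin n →₀ ℕ) (hdm : (∑ j, a j) ≤ m)
    (x : Fin n → ℝ) (w : ℝ)
    (hmem : (x, w) ∈ convexHull ℝ {q : (Fin n → ℝ) × ℝ | q.1 ∈ S ∧ q.2 = ∏ j, q.1 j ^ a j}) :
    |(∏ j, x j ^ a j) - w| ≤ (1 - 1/(m:ℝ)) * (m:ℝ) ^ ((1:ℝ)/(1-(m:ℝ))) := by
  classical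
  set d : ℕ := ∑ j, a j with hdd
  set K : Set ((Fin n → ℝ) × ℝ) :=
    {q | (∀ j, 0 ≤ q.1 j ∧ q.1 j ≤ 1) ∧ 0 ≤ q.2 ∧ q.2 ≤ 1 ∧
      (∑ j, (a j : ℝ) * q.1 j) - ((d:ℝ) - 1) ≤ q.2 ∧
      ∀ j, a j ≠ 0 → q.2 ≤ q.1 j} with hK
  have hconv : Convex ℝ K := by
    rintro ⟨q1, q2⟩ ⟨hq1, hq2, hq3, hq4, hq5⟩ ⟨r1, r2⟩ ⟨hr1, hr2, hr3, hr4, hr5⟩ α β hα hβ hαβ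
    have hfst : ∀ j, (α • (q1, q2) + β • (r1, r2)).1 j = α * q1 j + β * r1 j := by
      intro j; simp [Prod.smul_fst, Prod.fst_add]
    have hsnd : (α • (q1, q2) + β • (r1, r2)).2 = α * q2 + β * r2 := by
      simp [Prod.smul_snd, Prod.snd_add]
    refine ⟨fun j => ?_, ?_, ?_, ?_, fun j hj => ?_⟩
    · rw [hfst]
      constructor
      · have := (hq1 j).1; have := (hr1 j).1; positivity
      · have h1 := (hq1 j).2; have h2 := (hr1 j).2
        have := (hq1 j).1; have := (hr1 j).1
        nlinarith
    · rw [hsnd]; positivity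
    · rw [hsnd]; nlinarith
    · rw [hsnd]
      have hsum : (∑ j, (a j : ℝ) * (α • (q1, q2) + β • (r1, r2)).1 j)
          = α * (∑ j, (a j : ℝ) * q1 j) + β * (∑ j, (a j : ℝ) * r1 j) := by
        rw [Finset.mul_sum, Finset.mul_sum, ← Finset.sum_add_distrib]
        apply Finset.sum_congr rfl
        intro j _
        rw [hfst]
        ring
      rw [hsum]
      nlinarith
    · rw [hsnd, hfst]
      have h1 := hq5 j hj; have h2 := hr5 j hj
      nlinarith
  have hsub : {q : (Fin n → ℝ) × ℝ | q.1 ∈ S ∧ q.2 = ∏ j, q.1 j ^ a j} ⊆ K := by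
    rintro ⟨y, v⟩ ⟨hyS, hv⟩
    have hy := hSsub hyS
    have hy0 : ∀ j, 0 ≤ y j := fun j => hy.1 j
    have hy1 : ∀ j, y j ≤ 1 := fun j => hy.2 j
    refine ⟨fun j => ⟨hy0 j, hy1 j⟩, ?_, ?_, ?_, fun j hj => ?_⟩
    · rw [hv]; exact Finset.prod_nonneg fun j _ => pow_nonneg (hy0 j) _
    · rw [hv]
      exact Finset.prod_le_one (fun j _ => pow_nonneg (hy0 j) _)
        (fun j _ => pow_le_one₀ (hy0 j) (hy1 j))
    · rw [hv]
      have hw := weier Finset.univ (fun j => a j) y hy0 hy1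
      have heq : (∑ j, (a j : ℝ) * y j) - ((d:ℝ) - 1)
          = 1 - ∑ j, (a j : ℝ) * (1 - y j) := by
        rw [hdd]
        push_cast
        have hsplit : ∑ j, (a j:ℝ) * (1 - y j) = (∑ j, (a j:ℝ)) - ∑ j, (a j:ℝ) * y j := by
          rw [← Finset.sum_sub_distrib]
          exact Finset.sum_congr rfl fun j _ => by ring
        rw [hsplit]
        ring
      rw [heq]
      exact hw
    · rw [hv]
      calc ∏ k, y k ^ a k = y j ^ a j * ∏ k ∈ Finset.univ.erase j, y k ^ a k :=
            (Finset.mul_prod_erase Finset.univ _ (Finset.mem_univ j)).symm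
      _ ≤ y j ^ a j * 1 := by
            apply mul_le_mul_of_nonneg_left _ (pow_nonneg (hy0 j) _)
            exact Finset.prod_le_one (fun k _ => pow_nonneg (hy0 k) _)
              (fun k _ => pow_le_one₀ (hy0 k) (hy1 k))
      _ = y j ^ a j := mul_one _
      _ ≤ y j := by
            have h1 : 1 ≤ a j := Nat.one_le_iff_ne_zero.mpr hj
            calc y j ^ a j ≤ y j ^ 1 := pow_le_pow_of_le_one (hy0 j) (hy1 j) h1
            _ = y j := pow_one _
  have hKm : (x, w) ∈ K := convexHull_min hsub hconv hmem
  obtain ⟨hx01, hw0, hw1, hwl, hwu⟩ := hKm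
  have hx0 : ∀ j, 0 ≤ x j := fun j => (hx01 j).1
  have hx1 : ∀ j, x j ≤ 1 := fun j => (hx01 j).2
  have hf0 : (0:ℝ) ≤ ∏ j, x j ^ a j := Finset.prod_nonneg fun j _ => pow_nonneg (hx0 j) _
  have hf1 : (∏ j, x j ^ a j) ≤ 1 :=
    Finset.prod_le_one (fun j _ => pow_nonneg (hx0 j) _) (fun j _ => pow_le_one₀ (hx0 j) (hx1 j))
  rcases Nat.eq_zero_or_pos d with hd0 | hd1
  · -- d = 0 : all exponents zero
    have ha0 : ∀ j, a j = 0 := by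
      intro j
      have := Finset.sum_eq_zero_iff.mp (hdd ▸ hd0 : (∑ j, a j) = 0)
      exact this j (Finset.mem_univ j)
    have hfeq : (∏ j, x j ^ a j) = 1 := by
      apply Finset.prod_eq_one; intro j _; rw [ha0 j, pow_zero]
    have hl : (1:ℝ) ≤ w := by
      have h0 : (∑ j, (a j : ℝ) * x j) = 0 := by
        apply Finset.sum_eq_zero; intro j _; rw [ha0 j]; norm_num
      have hdR : ((d:ℕ):ℝ) = 0 := by rw [hd0]; norm_num
      rw [h0, hdR] at hwl
      linarith
    rw [hfeq]
    have : |1 - w| = w - 1 ∨ |1 - w| = 1 - w := by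
      rcases abs_cases (1 - w) with ⟨h, _⟩ | ⟨h, _⟩
      · right; exact h
      · left; rw [h]; ring
    have hD := Dnn m hm
    rcases this with h | h <;> rw [h] <;> linarith
  · -- 1 ≤ d
    have hd1 : 1 ≤ d := hd1
    have hdR : (0:ℝ) < d := by exact_mod_cast hd1
    have hdne : (d:ℝ) ≠ 0 := ne_of_gt hdR
    have hdcast : ((d:ℕ):ℝ) = ∑ j, (a j:ℝ) := by rw [hdd]; push_cast; rfl
    set σ : ℝ := (∑ j, (a j : ℝ) * x j) / d with hσ
    have hsum0 : 0 ≤ ∑ j, (a j : ℝ) * x j :=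
      Finset.sum_nonneg fun j _ => mul_nonneg (by positivity) (hx0 j)
    have hsumd : ∑ j, (a j : ℝ) * x j ≤ d := by
      have h1 : ∑ j, (a j : ℝ) * x j ≤ ∑ j, (a j : ℝ) :=
        Finset.sum_le_sum fun j _ => by
          nlinarith [hx1 j, hx0 j, (Nat.cast_nonneg (a j) : (0:ℝ) ≤ a j)]
      rw [hdcast]; exact h1
    have hσ0 : 0 ≤ σ := by positivity
    have hσ1 : σ ≤ 1 := by rw [hσ, div_le_one hdR]; exact hsumd
    have ham : (∏ j, x j ^ a j) ≤ σ ^ d := by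
      have hgm := Real.geom_mean_le_arith_mean_weighted Finset.univ
        (fun j => (a j : ℝ)/d) (fun j => x j)
        (fun j _ => by positivity)
        (by rw [← Finset.sum_div, ← hdcast]; field_simp)
        (fun j _ => hx0 j)
      have hr : ∑ j, ((a j:ℝ)/(d:ℝ)) * x j = σ := by
        rw [hσ, Finset.sum_div]
        exact Finset.sum_congr rfl fun j _ => by ring
      have hL : (∏ j, x j ^ ((a j:ℝ)/(d:ℝ))) ^ d = ∏ j, x j ^ a j := by
        rw [← Finset.prod_pow]
        apply Finset.prod_congr rfl
        intro j _
        rw [← Real.rpow_natCast (x j ^ ((a j:ℝ)/(d:ℝ))) d, ← Real.rpow_mul (hx0 j),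
          div_mul_cancel₀ _ hdne, Real.rpow_natCast]
      calc (∏ j, x j ^ a j) = (∏ j, x j ^ ((a j:ℝ)/(d:ℝ))) ^ d := hL.symm
      _ ≤ σ ^ d := pow_le_pow_left₀
          (Finset.prod_nonneg fun j _ => Real.rpow_nonneg (hx0 j) _) (hr ▸ hgm) d
    have hconvside : (∏ j, x j ^ a j) - w
        ≤ (1 - 1/(m:ℝ)) * (m:ℝ) ^ ((1:ℝ)/(1-(m:ℝ))) := by
      apply conv_gap m d hm hd1 hdm σ _ hσ0 hσ1
      · linarith [ham]
      · have hds : (d:ℝ) * σ = ∑ j, (a j:ℝ) * x j := by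
          rw [hσ]; field_simp
        have h2 := hwl
        simp only at h2
        nlinarith [ham]
    have hconcside : w - (∏ j, x j ^ a j)
        ≤ (1 - 1/(m:ℝ)) * (m:ℝ) ^ ((1:ℝ)/(1-(m:ℝ))) := by
      have hTne : (Finset.univ.filter (fun j => a j ≠ 0)).Nonempty := by
        by_contra h
        rw [Finset.not_nonempty_iff_eq_empty, Finset.filter_eq_empty_iff] at h
        have : d = 0 := by
          rw [hdd]
          apply Finset.sum_eq_zero
          intro j hj
          have := h hj
          simpa using this
        omega
      obtain ⟨j₀, hj₀T, hj₀min⟩ := Finset.exists_min_image _ (fun j => x j) hTne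
      have hj₀ : a j₀ ≠ 0 := (Finset.mem_filter.mp hj₀T).2
      set t := x j₀ with ht
      have ht0 : 0 ≤ t := hx0 j₀
      have ht1 : t ≤ 1 := hx1 j₀
      have hwt : w ≤ t := hwu j₀ hj₀
      have hft : t ^ d ≤ ∏ j, x j ^ a j := by
        have h1 : ∏ j, x j ^ a j
            = ∏ j ∈ Finset.univ.filter (fun j => a j ≠ 0), x j ^ a j := by
          symm
          apply Finset.prod_subset (Finset.filter_subset _ _)
          intro j _ hj
          have : a j = 0 := by
            by_contra hne
            exact hj (Finset.mem_filter.mpr ⟨Finset.mem_univ j, hne⟩)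
          rw [this, pow_zero]
        have h3 : ∑ j ∈ Finset.univ.filter (fun j => a j ≠ 0), a j = d := by
          rw [hdd]
          apply Finset.sum_subset (Finset.filter_subset _ _)
          intro j _ hj
          by_contra hne
          exact hj (Finset.mem_filter.mpr ⟨Finset.mem_univ j, hne⟩)
        have h2 : ∏ j ∈ Finset.univ.filter (fun j => a j ≠ 0), t ^ a j
            ≤ ∏ j ∈ Finset.univ.filter (fun j => a j ≠ 0), x j ^ a j := by
          apply Finset.prod_le_prod
          · intro j _; exact pow_nonneg ht0 _
          · intro j hj
            exact pow_le_pow_left₀ ht0 (hj₀min j hj) _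
        have h4 : ∏ j ∈ Finset.univ.filter (fun j => a j ≠ 0), t ^ a j = t ^ d := by
          rw [Finset.prod_pow_eq_pow_sum, h3]
        rw [h1]
        rw [h4] at h2
        exact h2
      have htm : t ^ m ≤ t ^ d := pow_le_pow_of_le_one ht0 ht1 hdm
      have := conc_gap m hm t ht0 ht1
      linarith
    rw [abs_le]
    constructor
    · linarith
    · linarith








theorem stmt2 (n : ℕ) (hn : 1 ≤ n) (m : ℕ) (hm : 2 ≤ m)
    (S : Set (Fin n → ℝ)) (hS : S.Nonempty) (hScompact : IsCompact S)
    (hSconvex : Convex ℝ S) (hSsub : S ⊆ Set.Icc 0 1)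
    (p : MvPolynomial (Fin n) ℝ) (hdeg : p.totalDegree ≤ m)
    (hsupp : p.support.Nonempty)
    (zS zmon : ℝ)
    (hzS : zS = sInf ((fun x => MvPolynomial.eval x p) '' S))
    (hzmon : zmon = sInf {z : ℝ | ∃ x ∈ S, ∃ w : (Fin n →₀ ℕ) → ℝ,
      (∀ a ∈ p.support, (x, w a) ∈ convexHull ℝ
        {q : (Fin n → ℝ) × ℝ | q.1 ∈ S ∧ q.2 = ∏ j, q.1 j ^ a j}) ∧
      z = ∑ a ∈ p.support, p.coeff a * w a}) :
    zS - zmon ≤ (p.support.sup' hsupp fun a => |p.coeff a|) *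
      ((1 - 1 / (m : ℝ)) * (m : ℝ) ^ ((1 : ℝ) / (1 - (m : ℝ)))) * (n + m).choose n := by
  classical
  set D : ℝ := (1 - 1 / (m : ℝ)) * (m : ℝ) ^ ((1 : ℝ) / (1 - (m : ℝ))) with hD
  set M : ℝ := p.support.sup' hsupp fun a => |p.coeff a| with hM
  have hD0 : 0 ≤ D := Dnn m hm
  obtain ⟨a₀, ha₀⟩ := hsupp
  have hM0 : 0 ≤ M := le_trans (abs_nonneg (p.coeff a₀)) (Finset.le_sup' (fun a => |p.coeff a|) ha₀)
  set Z : Set ℝ := {z : ℝ | ∃ x ∈ S, ∃ w : (Fin n →₀ ℕ) → ℝ,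
      (∀ a ∈ p.support, (x, w a) ∈ convexHull ℝ
        {q : (Fin n → ℝ) × ℝ | q.1 ∈ S ∧ q.2 = ∏ j, q.1 j ^ a j}) ∧
      z = ∑ a ∈ p.support, p.coeff a * w a} with hZ
  -- Z is nonempty
  obtain ⟨x₀, hx₀⟩ := hS
  have hZne : Z.Nonempty := by
    refine ⟨∑ a ∈ p.support, p.coeff a * ∏ j, x₀ j ^ a j,
      x₀, hx₀, fun a => ∏ j, x₀ j ^ a j, fun a _ => ?_, rfl⟩
    exact subset_convexHull ℝ _ ⟨hx₀, rfl⟩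
  -- each α in support has degree ≤ m
  have hdm : ∀ a ∈ p.support, (∑ j, a j) ≤ m := by
    intro a ha
    have h1 := MvPolynomial.le_totalDegree ha
    have h2 : (a.sum fun _ e => e) = ∑ j, a j :=
      Finsupp.sum_fintype _ _ (fun _ => rfl)
    omega
  -- main bound for every z ∈ Z
  have key : ∀ z ∈ Z, zS - M * D * (n + m).choose n ≤ z := by
    rintro z ⟨x, hxS, w, hw, rfl⟩
    have hbdd : BddBelow ((fun x => MvPolynomial.eval x p) '' S) :=
      (hScompact.image (MvPolynomial.continuous_eval p)).bddBelow
    have h1 : zS ≤ MvPolynomial.eval x p := by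
      rw [hzS]
      exact csInf_le hbdd (Set.mem_image_of_mem _ hxS)
    have h2 : MvPolynomial.eval x p - (∑ a ∈ p.support, p.coeff a * w a)
        ≤ M * D * (n + m).choose n := by
      rw [MvPolynomial.eval_eq' x p, ← Finset.sum_sub_distrib]
      have hterm : ∀ a ∈ p.support,
          p.coeff a * (∏ j, x j ^ a j) - p.coeff a * w a ≤ M * D := by
        intro a ha
        have hgap := hull_gap n m hm S hSsub a (hdm a ha) x (w a) (hw a ha)
        have hMa : |p.coeff a| ≤ M := Finset.le_sup' (fun a => |p.coeff a|) ha
        calc p.coeff a * (∏ j, x j ^ a j) - p.coeff a * w a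
            = p.coeff a * ((∏ j, x j ^ a j) - w a) := by ring
        _ ≤ |p.coeff a * ((∏ j, x j ^ a j) - w a)| := le_abs_self _
        _ = |p.coeff a| * |(∏ j, x j ^ a j) - w a| := abs_mul _ _
        _ ≤ M * D := mul_le_mul hMa hgap (abs_nonneg _) hM0
      calc ∑ a ∈ p.support, (p.coeff a * (∏ j, x j ^ a j) - p.coeff a * w a)
          ≤ ∑ _a ∈ p.support, M * D := Finset.sum_le_sum hterm
      _ = p.support.card * (M * D) := by rw [Finset.sum_const, nsmul_eq_mul]
      _ ≤ ((n + m).choose n : ℝ) * (M * D) := by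
          apply mul_le_mul_of_nonneg_right _ (mul_nonneg hM0 hD0)
          exact_mod_cast card_support_le n m p hdeg
      _ = M * D * (n + m).choose n := by ring
    linarith
  have hfin : zS - M * D * (n + m).choose n ≤ zmon := by
    rw [hzmon]
    exact le_csInf hZne key
  linarith
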